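/- Let Q_1, …, Q_N be finitely supported nonnegative measures on ℝ^d, each of the same total mass m > 0. Then there exists a finitely supported nonnegative measure γ on (ℝ^d)^N whose i-th marginal equals Q_i for every i = 1, …, N and whose support satisfies |supp(γ)| ≤ ∑_{i=1}^N |supp(Q_i)| − N + 1. -/

import Mathlib

open MeasureTheory ENNReal

/-- Points of `ℝ^d`. -/
abbrev Pt (d : ℕ) := EuclideanSpace ℝ (Fin d)

/-- The set of atoms (support points) of a measure. -/
def msupp {α : Type*} [MeasurableSpace α] (P : Measure α) : Set α := {x | P {x} ≠ 0}

/-- A measure is finitely supported (discrete) if its set of atoms is finite and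
carries all the mass. -/
def FinitelySupported {α : Type*} [MeasurableSpace α] (P : Measure α) : Prop :=
  (msupp P).Finite ∧ P (msupp P)ᶜ = 0

/-- Finite second moment. -/
def FiniteSecondMoment {d : ℕ} (P : Measure (Pt d)) : Prop :=
  ∫⁻ x, ENNReal.ofReal (‖x‖ ^ 2) ∂P < ⊤

/-- The squared 2-Wasserstein distance: the infimum of `∫ ‖x - y‖² dπ` over all
couplings `π` of `P` and `Q`. -/
noncomputable def W2sq {d : ℕ} (P Q : Measure (Pt d)) : ℝ≥0∞ :=
  ⨅ π ∈ {π : Measure (Pt d × Pt d) | π.map Prod.fst = P ∧ π.map Prod.snd = Q},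
    ∫⁻ p, ENNReal.ofReal (‖p.1 - p.2‖ ^ 2) ∂π

/-- The barycenter objective `φ(P) = ∑ i, λ i * W₂(P, P i)²`. -/
noncomputable def phi {d N : ℕ} (l : Fin N → ℝ) (Pm : Fin N → Measure (Pt d))
    (P : Measure (Pt d)) : ℝ≥0∞ :=
  ∑ i, ENNReal.ofReal (l i) * W2sq P (Pm i)

/-- A (Wasserstein) barycenter: a probability measure with finite second moment
minimizing `φ` among all such measures. -/
def IsBarycenter {d N : ℕ} (l : Fin N → ℝ) (Pm : Fin N → Measure (Pt d))
    (P : Measure (Pt d)) : Prop :=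
  IsProbabilityMeasure P ∧ FiniteSecondMoment P ∧
    ∀ Q : Measure (Pt d), IsProbabilityMeasure Q → FiniteSecondMoment Q →
      phi l Pm P ≤ phi l Pm Q

/-- The set `S` of weighted centroids of combinations of support points,
one from each measure. -/
def centroidSet {d N : ℕ} (l : Fin N → ℝ) (Pm : Fin N → Measure (Pt d)) : Set (Pt d) :=
  {y | ∃ x : Fin N → Pt d, (∀ i, x i ∈ msupp (Pm i)) ∧ y = ∑ i, l i • x i}

/-- The union `S_org` of the supports of the measures. -/
def origSupport {d N : ℕ} (Pm : Fin N → Measure (Pt d)) : Set (Pt d) :=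
  ⋃ i, msupp (Pm i)


lemma core {α : Type*} [DecidableEq α] :
    ∀ (n : ℕ) (N : ℕ) (s : Fin N → Finset α) (w : Fin N → α → ℝ≥0∞) (M : ℝ≥0∞),
    (∑ i, (s i).card) = n →
    M ≠ 0 → M ≠ ⊤ →
    (∀ i x, x ∉ s i → w i x = 0) →
    (∀ i, ∑ x ∈ s i, w i x = M) →
    ∃ (T : Finset (Fin N → α)) (W : (Fin N → α) → ℝ≥0∞),
      (∀ g, g ∉ T → W g = 0) ∧
      (∀ i x, (∑ g ∈ T, if g i = x then W g else 0) = w i x) ∧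
      T.card + N ≤ (∑ i, (s i).card) + 1 := by
  intro n
  induction n using Nat.strong_induction_on with
  | _ n ih =>
    intro N s w M hn hM0 hMtop hsupp htot
    classical
    rcases Nat.eq_zero_or_pos N with hN | hN
    · subst hN
      refine ⟨∅, fun _ => 0, fun _ _ => rfl, fun i => i.elim0, by simp⟩
    have hne : ∀ i, (s i).Nonempty := by
      intro i
      rw [Finset.nonempty_iff_ne_empty]
      intro h
      exact hM0 (by rw [← htot i, h, Finset.sum_empty])
    choose y hy hymax using fun i => Finset.exists_max_image (s i) (w i) (hne i)
    have hypos : ∀ i, w i (y i) ≠ 0 := by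
      intro i h0
      apply hM0
      rw [← htot i]
      exact Finset.sum_eq_zero fun x hx => le_antisymm (h0 ▸ hymax i x hx) (zero_le)
    have huniv : (Finset.univ : Finset (Fin N)).Nonempty := by
      simpa [Finset.univ_nonempty_iff] using Fin.pos_iff_nonempty.mp hN
    obtain ⟨i₀, -, hi₀⟩ := Finset.exists_min_image Finset.univ (fun i => w i (y i)) huniv
    set δ := w i₀ (y i₀) with hδ
    have hδ0 : δ ≠ 0 := hypos i₀
    have hδtop : δ ≠ ⊤ → True := fun _ => trivial
    have hδle : ∀ i, δ ≤ w i (y i) := fun i => hi₀ i (Finset.mem_univ i)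
    have hδleM : ∀ i, w i (y i) ≤ M := by
      intro i
      rw [← htot i]
      exact Finset.single_le_sum (fun x _ => zero_le) (hy i)
    have hNle : N ≤ ∑ i, (s i).card := by
      calc N = ∑ _i : Fin N, 1 := by simp
      _ ≤ ∑ i, (s i).card := Finset.sum_le_sum fun i _ => Finset.card_pos.mpr (hne i)
    by_cases hδM : δ = M
    · -- base case: every measure is the dirac at y i with mass M
      have hyM : ∀ i, w i (y i) = M := fun i => le_antisymm (hδleM i) (hδM ▸ hδle i)
      refine ⟨{y}, fun g => if g = y then M else 0, ?_, ?_, ?_⟩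
      · intro g hg
        simp only [Finset.mem_singleton] at hg
        simp [hg]
      · intro i x
        rw [Finset.sum_singleton]
        simp only [if_pos rfl]
        by_cases hx : y i = x
        · subst hx; simp [hyM i]
        · rw [if_neg hx]
          by_cases hxs : x ∈ s i
          · have h1 := Finset.add_sum_erase (s i) (w i) (hy i)
            rw [htot i, hyM i] at h1
            have h2 : ∑ z ∈ (s i).erase (y i), w i z = 0 :=
              ((ENNReal.add_right_inj hMtop).mp (by rw [h1, add_zero])).symm
            exact (Finset.sum_eq_zero_iff.mp h2 x
              (Finset.mem_erase.mpr ⟨fun h => hx h.symm, hxs⟩)).symm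
          · exact (hsupp i x hxs).symm
      · rw [Finset.card_singleton]; omega
    · -- inductive step
      have hδltM : δ < M := lt_of_le_of_ne ((hδle i₀).trans (hδleM i₀)) hδM
      have hδtop' : δ ≠ ⊤ := ne_top_of_lt hδltM
      set w' : Fin N → α → ℝ≥0∞ := fun i x => w i x - if x = y i then δ else 0 with hw'
      set s' : Fin N → Finset α := Function.update s i₀ ((s i₀).erase (y i₀)) with hs'
      have hw'le : ∀ i x, w' i x ≤ w i x := fun i x => tsub_le_self
      have hw'eq : ∀ i x, x ≠ y i → w' i x = w i x := by
        intro i x hx; simp [hw', if_neg hx]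
      have herase_sum : ∀ i, ∑ x ∈ (s i).erase (y i), w' i x
          = ∑ x ∈ (s i).erase (y i), w i x :=
        fun i => Finset.sum_congr rfl fun x hx => hw'eq i x (Finset.mem_erase.mp hx).1
      have hs'apply : ∀ i, s' i = if i = i₀ then (s i₀).erase (y i₀) else s i := by
        intro i
        rw [hs', Function.update_apply]
      have htot' : ∀ i, ∑ x ∈ s' i, w' i x = M - δ := by
        intro i
        by_cases hii : i = i₀
        · subst hii
          rw [hs'apply, if_pos rfl, herase_sum]
          refine (ENNReal.sub_eq_of_eq_add_rev hδtop' ?_).symm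
          rw [hδ, Finset.add_sum_erase _ _ (hy i), htot i]
        · rw [hs'apply, if_neg hii]
          refine (ENNReal.sub_eq_of_eq_add_rev hδtop' ?_).symm
          rw [← Finset.add_sum_erase _ (w' i) (hy i), herase_sum]
          have h2 : w' i (y i) = w i (y i) - δ := by simp [hw']
          rw [h2, ← add_assoc, add_tsub_cancel_of_le (hδle i),
            Finset.add_sum_erase _ _ (hy i), htot i]
      have hsupp' : ∀ i x, x ∉ s' i → w' i x = 0 := by
        intro i x hx
        rw [hs'apply] at hx
        by_cases hii : i = i₀
        · subst hii
          rw [if_pos rfl] at hx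
          by_cases hxy : x = y i
          · simp [hw', hxy, hδ]
          · rw [hw'eq i x hxy]
            exact hsupp i x fun hxs => hx (Finset.mem_erase.mpr ⟨hxy, hxs⟩)
        · rw [if_neg hii] at hx
          exact le_antisymm ((hw'le i x).trans_eq (hsupp i x hx)) (zero_le)
      have hcard' : (∑ i, (s' i).card) + 1 = ∑ i, (s i).card := by
        have hupd : ∀ j, (s' j).card
            = Function.update (fun j => (s j).card) i₀ ((s i₀).card - 1) j := by
          intro j
          rw [hs'apply, Function.update_apply]
          by_cases hj : j = i₀
          · simp [hj, Finset.card_erase_of_mem (hy i₀)]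
          · simp [hj]
        rw [Finset.sum_congr rfl fun j _ => hupd j,
          Finset.sum_update_of_mem (Finset.mem_univ i₀)]
        have h2 : ∑ i, (s i).card = (s i₀).card + ∑ i ∈ Finset.univ \ {i₀}, (s i).card := by
          rw [← Finset.sum_update_of_mem (Finset.mem_univ i₀)]
          exact Finset.sum_congr rfl fun j _ => by
            rw [Function.update_apply]; by_cases hj : j = i₀ <;> simp [hj]
        have hc0 : 1 ≤ (s i₀).card := Finset.card_pos.mpr (hne i₀)
        omega
      have hlt : ∑ i, (s' i).card < n := by omega
      obtain ⟨T', W', hW'supp, hW'marg, hc'⟩ :=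
        ih _ hlt N s' w' (M - δ) rfl (tsub_pos_iff_lt.mpr hδltM).ne'
          (ne_top_of_le_ne_top hMtop tsub_le_self) hsupp' htot'
      refine ⟨insert y T', fun g => (if g = y then δ else 0) + W' g, ?_, ?_, ?_⟩
      · intro g hg
        rw [Finset.mem_insert] at hg
        push_neg at hg
        dsimp only
        rw [if_neg hg.1, hW'supp g hg.2, add_zero]
      · intro i x
        dsimp only
        have hsplit : (∑ g ∈ insert y T',
              if g i = x then (if g = y then δ else 0) + W' g else 0)
            = (∑ g ∈ insert y T', if g i = x then (if g = y then δ else 0) else 0)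
              + ∑ g ∈ insert y T', if g i = x then W' g else 0 := by
          rw [← Finset.sum_add_distrib]
          refine Finset.sum_congr rfl fun g _ => by split <;> simp
        rw [hsplit]
        have hfirst : (∑ g ∈ insert y T', if g i = x then (if g = y then δ else 0) else 0)
            = if y i = x then δ else 0 := by
          have hc : ∀ g ∈ insert y T',
              (if g i = x then (if g = y then δ else 0) else 0)
                = if g = y then (if y i = x then δ else 0) else 0 := by
            intro g _
            by_cases hgy : g = y
            · subst hgy; simp
            · simp [hgy]
          rw [Finset.sum_congr rfl hc, Finset.sum_ite_eq' (insert y T') y]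
          simp
        have hsecond : (∑ g ∈ insert y T', if g i = x then W' g else 0) = w' i x := by
          by_cases hyT : y ∈ T'
          · rw [Finset.insert_eq_self.mpr hyT, hW'marg]
          · rw [Finset.sum_insert hyT, hW'supp y hyT, hW'marg]
            simp
        rw [hfirst, hsecond]
        by_cases hx : x = y i
        · subst hx
          rw [if_pos rfl]
          show δ + w' i (y i) = w i (y i)
          simp only [hw', if_pos rfl]
          exact add_tsub_cancel_of_le (hδle i)
        · rw [if_neg (fun h => hx h.symm), zero_add, hw'eq i x hx]
      · have := Finset.card_insert_le y T'
        omega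


lemma discrete_apply {β : Type*} [MeasurableSpace β] [MeasurableSingletonClass β]
    (T : Finset β) (W : β → ℝ≥0∞) (A : Set β) :
    (∑ g ∈ T, W g • Measure.dirac g) A = ∑ g ∈ T, W g * A.indicator 1 g := by
  simp [Measure.coe_finset_sum, Finset.sum_apply, Measure.smul_apply, Measure.dirac_apply,
    smul_eq_mul]

lemma discrete_singleton {β : Type*} [MeasurableSpace β] [MeasurableSingletonClass β]
    [DecidableEq β] (T : Finset β) (W : β → ℝ≥0∞) (g : β) :
    (∑ h ∈ T, W h • Measure.dirac h) {g} = if g ∈ T then W g else 0 := by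
  rw [discrete_apply]
  have : ∀ h ∈ T, W h * ({g} : Set β).indicator 1 h = if h = g then W h else 0 := by
    intro h _
    rw [Set.indicator_apply]
    simp only [Set.mem_singleton_iff]
    split <;> simp
  rw [Finset.sum_congr rfl this, Finset.sum_ite_eq' T g]

lemma finsupp_eq_sum {β : Type*} [MeasurableSpace β] [MeasurableSingletonClass β]
    {Q : Measure β} (h : FinitelySupported Q) :
    Q = ∑ x ∈ h.1.toFinset, Q {x} • Measure.dirac x := by
  classical
  ext A hA
  rw [discrete_apply]
  have h1 : Q (A ∩ ↑h.1.toFinset) + Q (A \ ↑h.1.toFinset) = Q A :=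
    measure_inter_add_diff A h.1.toFinset.finite_toSet.measurableSet
  have h2 : Q (A \ ↑h.1.toFinset) = 0 := by
    refine measure_mono_null ?_ h.2
    intro x hx
    simp only [Set.mem_diff, Set.Finite.coe_toFinset] at hx
    exact hx.2
  have h3 : A ∩ ↑h.1.toFinset = ⋃ x ∈ h.1.toFinset.filter (· ∈ A), ({x} : Set β) := by
    ext z
    simp only [Set.mem_inter_iff, Set.mem_iUnion, Finset.mem_filter, Set.mem_singleton_iff,
      Finset.mem_coe]
    constructor
    · rintro ⟨hzA, hzF⟩; exact ⟨z, ⟨hzF, hzA⟩, rfl⟩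
    · rintro ⟨x, ⟨hxF, hxA⟩, rfl⟩; exact ⟨hxA, hxF⟩
  have h4 : Q (A ∩ ↑h.1.toFinset) = ∑ x ∈ h.1.toFinset.filter (· ∈ A), Q {x} := by
    rw [h3]
    refine measure_biUnion_finset ?_ fun b _ => measurableSet_singleton b
    intro a _ b _ hab
    simp [Set.disjoint_singleton, hab]
  have h5 : ∑ x ∈ h.1.toFinset, Q {x} * A.indicator 1 x
      = ∑ x ∈ h.1.toFinset.filter (· ∈ A), Q {x} := by
    rw [Finset.sum_filter]
    refine Finset.sum_congr rfl fun x _ => ?_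
    rw [Set.indicator_apply]
    split <;> simp
  rw [h5, ← h4, ← h1, h2, add_zero]

lemma measure_map_finset_sum {β γ' : Type*} [MeasurableSpace β] [MeasurableSpace γ'] {f : β → γ'}
    (hf : Measurable f) {ι : Type*} (t : Finset ι) (μ : ι → Measure β) :
    (∑ j ∈ t, μ j).map f = ∑ j ∈ t, (μ j).map f := by
  induction t using Finset.cons_induction with
  | empty => simp
  | cons a t ha ihh => rw [Finset.sum_cons, Measure.map_add _ _ hf, ihh, Finset.sum_cons]


/-- for finitely supported nonnegative measures Q₁, …, Q_N on ℝ^d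
of equal total mass m > 0 there exists a finitely supported measure γ on
(ℝ^d)^N with i-th marginal Qᵢ and at most ∑ i, |supp Qᵢ| - N + 1 support
points. -/
theorem exists_sparse_multicoupling {d N : ℕ}
    (Q : Fin N → Measure (Pt d)) (hfin : ∀ i, FinitelySupported (Q i))
    (m : ℝ) (hm : 0 < m) (hmass : ∀ i, Q i Set.univ = ENNReal.ofReal m) :
    ∃ γ : Measure (Fin N → Pt d), FinitelySupported γ ∧
      (∀ i, γ.map (fun f => f i) = Q i) ∧
      (msupp γ).ncard ≤ (∑ i, (msupp (Q i)).ncard) - N + 1 := by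
  classical
  set F : Fin N → Finset (Pt d) := fun i => (hfin i).1.toFinset with hF
  have hmem : ∀ i x, x ∈ F i ↔ Q i {x} ≠ 0 := by
    intro i x
    rw [hF]
    simp only [Set.Finite.mem_toFinset]
    rfl
  have hQeq : ∀ i, Q i = ∑ x ∈ F i, Q i {x} • Measure.dirac x := fun i => finsupp_eq_sum (hfin i)
  have htot : ∀ i, ∑ x ∈ F i, Q i {x} = ENNReal.ofReal m := by
    intro i
    have h := congrArg (fun μ : Measure (Pt d) => μ Set.univ) (hQeq i)
    simp only [hmass i] at h
    rw [h, discrete_apply]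
    simp
  obtain ⟨T, W, hWsupp, hmarg, hcard⟩ := core (∑ i, (F i).card) N F (fun i x => Q i {x})
      (ENNReal.ofReal m) rfl
      (by simp [ENNReal.ofReal_eq_zero, not_le, hm])
      ENNReal.ofReal_ne_top
      (fun i x hx => by
        by_contra h
        exact hx ((hmem i x).mpr h))
      htot
  set γ : Measure (Fin N → Pt d) := ∑ g ∈ T, W g • Measure.dirac g with hγ
  have hsingleton : ∀ g, γ {g} = if g ∈ T then W g else 0 := fun g => discrete_singleton T W g
  have hsub : msupp γ ⊆ ↑T := by
    intro g hg
    by_contra h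
    apply hg
    rw [hsingleton, if_neg (by simpa using h)]
  refine ⟨γ, ⟨Set.Finite.subset T.finite_toSet hsub, ?_⟩, ?_, ?_⟩
  · rw [hγ, discrete_apply]
    refine Finset.sum_eq_zero fun g hg => ?_
    by_cases hW : W g = 0
    · rw [hW, zero_mul]
    · have hgm : g ∈ msupp γ := by
        show γ {g} ≠ 0
        rw [hsingleton, if_pos hg]
        exact hW
      rw [Set.indicator_of_notMem (by simpa using hgm), mul_zero]
  · intro i
    have hmeas : Measurable (fun f : Fin N → Pt d => f i) := measurable_pi_apply i
    have hmap : γ.map (fun f => f i) = ∑ g ∈ T, W g • Measure.dirac (g i) := by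
      rw [hγ, measure_map_finset_sum hmeas]
      refine Finset.sum_congr rfl fun g _ => ?_
      rw [Measure.map_smul, Measure.map_dirac' hmeas]
    rw [hmap, hQeq i]
    have step1 : ∑ x ∈ F i, Q i {x} • Measure.dirac x
        = ∑ x ∈ F i, ∑ g ∈ T, (if g i = x then W g • Measure.dirac (g i) else 0) := by
      refine Finset.sum_congr rfl fun x _ => ?_
      rw [← hmarg i x, Finset.sum_smul]
      refine Finset.sum_congr rfl fun g _ => ?_
      split_ifs with h
      · rw [← h]
      · rw [zero_smul]
    rw [step1, Finset.sum_comm]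
    refine (Finset.sum_congr rfl fun g hg => ?_).symm
    rw [Finset.sum_ite_eq (F i) (g i)]
    by_cases hgF : g i ∈ F i
    · rw [if_pos hgF]
    · rw [if_neg hgF]
      have hq0 : Q i {g i} = 0 := by
        by_contra h
        exact hgF ((hmem i (g i)).mpr h)
      have hWg : W g = 0 := by
        have hs := hmarg i (g i)
        rw [hq0] at hs
        have := Finset.sum_eq_zero_iff.mp hs g hg
        simpa using this
      rw [hWg, zero_smul]
  · have h1 : (msupp γ).ncard ≤ T.card := by
      have := Set.ncard_le_ncard hsub T.finite_toSet
      rwa [Set.ncard_coe_finset] at this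
    have h2 : ∀ i, (msupp (Q i)).ncard = (F i).card := fun i =>
      Set.ncard_eq_toFinset_card _ (hfin i).1
    have h3 : ∑ i, (msupp (Q i)).ncard = ∑ i, (F i).card :=
      Finset.sum_congr rfl fun i _ => h2 i
    omega
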